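/- The nef-minimal subsets of the set of ten boundary classes are exactly: the twelve pairs {E_i, H − E_i − E_j} with i ≠ j, and the three pairs {H − E_i − E_j, H − E_k − E_l} with {i,j,k,l} = {0,1,2,3}. Moreover, each pair of the first kind sums to the nef vector H − E_j, and each pair of the second kind sums to the nef vector 2H − E_0 − E_1 − E_2 − E_3. (The classification of nef-minimal subsets in the paper's Example 4.10 for M̄_{0,5}.) -/

import Mathlib

open Finset

/-- Index type for the basis `H, E_0, E_1, E_2, E_3` of `Pic(M̄₀,₅) ⊗ ℝ`
(the blow-up of `ℙ²` at four general points). -/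
abbrev Idx5 : Type := Unit ⊕ Fin 4

/-- The 5-dimensional real vector space `V = ℝ⁵`. -/
abbrev V5 : Type := Idx5 → ℝ

noncomputable section

/-- The hyperplane class `H`. -/
def bH : V5 := fun k => if k = Sum.inl () then 1 else 0

/-- The exceptional class `E_i`. -/
def bE (i : Fin 4) : V5 := fun k => if k = Sum.inr i then 1 else 0

/-- The intersection form: `⟨H,H⟩ = 1`, `⟨E_i,E_i⟩ = −1`, all other pairs of
basis vectors pairing to `0`. -/
def interForm (u v : V5) : ℝ :=
  u (Sum.inl ()) * v (Sum.inl ()) - ∑ i : Fin 4, u (Sum.inr i) * v (Sum.inr i)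

/-- The ten boundary classes `E_i` and `H − E_i − E_j` (`i ≠ j`). -/
def BoundaryClasses5 : Set V5 :=
  {v | (∃ i, v = bE i) ∨ (∃ i j, i ≠ j ∧ v = bH - bE i - bE j)}

/-- A vector `φ` is nef if it pairs nonnegatively with each boundary class. -/
def IsNef5 (φ : V5) : Prop := ∀ B ∈ BoundaryClasses5, 0 ≤ interForm φ B

/-- `v` is a nonnegative real linear combination of elements of `S`. -/
def IsNonnegCombi (S : Set V5) (v : V5) : Prop :=
  ∃ (n : ℕ) (c : Fin n → ℝ) (g : Fin n → V5),
    (∀ t, 0 ≤ c t) ∧ (∀ t, g t ∈ S) ∧ v = ∑ t, c t • g t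

/-- A subset `I` of the set of boundary classes is nef-minimal if some nonzero
nef vector is a nonnegative linear combination of elements of `I`, and no
proper subset of `I` has this property. -/
def NefMinimal5 (I : Set V5) : Prop :=
  I ⊆ BoundaryClasses5 ∧
  (∃ φ : V5, φ ≠ 0 ∧ IsNef5 φ ∧ IsNonnegCombi I φ) ∧
  ∀ J : Set V5, J ⊂ I → ¬∃ φ : V5, φ ≠ 0 ∧ IsNef5 φ ∧ IsNonnegCombi J φ

/-- **Example 4.10 (classification of nef-minimal subsets for `M̄₀,₅`).**
The nef-minimal subsets of the ten boundary classes are exactly the twelve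
pairs `{E_i, H − E_i − E_j}` (`i ≠ j`) and the three pairs
`{H − E_i − E_j, H − E_k − E_l}` (`{i,j,k,l} = {0,1,2,3}`).  Moreover each
pair of the first kind sums to the nef vector `H − E_j`, and each pair of the
second kind sums to the nef vector `2H − E_0 − E_1 − E_2 − E_3`. -/
lemma bH_inl : bH (Sum.inl ()) = 1 := by simp [bH]
lemma bH_inr (m : Fin 4) : bH (Sum.inr m) = 0 := by simp [bH]
lemma bE_inl (i : Fin 4) : bE i (Sum.inl ()) = 0 := by simp [bE]
lemma bE_inr (i m : Fin 4) : bE i (Sum.inr m) = if m = i then 1 else 0 := by simp [bE]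

lemma interForm_bE (φ : V5) (m : Fin 4) : interForm φ (bE m) = -φ (Sum.inr m) := by
  simp [interForm, bE, mul_ite, Finset.sum_ite_eq']

lemma interForm_H (φ : V5) (a b : Fin 4) :
    interForm φ (bH - bE a - bE b) = φ (Sum.inl ()) + φ (Sum.inr a) + φ (Sum.inr b) := by
  simp only [interForm, Pi.sub_apply, bH_inl, bH_inr, bE_inl, bE_inr, mul_sub, mul_ite,
    mul_one, mul_zero, Finset.sum_sub_distrib, Finset.sum_ite_eq', Finset.mem_univ, if_true]
  ring

lemma interForm_sum_left {n : ℕ} (c : Fin n → ℝ) (g : Fin n → V5) (B : V5) :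
    interForm (∑ t, c t • g t) B = ∑ t, c t * interForm (g t) B := by
  simp only [interForm, Finset.sum_apply, Pi.smul_apply, smul_eq_mul, Finset.sum_mul,
    mul_sub, Finset.mul_sum]
  rw [Finset.sum_sub_distrib, Finset.sum_comm]
  ring_nf
  rw [sub_eq_neg_add]
  congr 1
  exact Finset.sum_congr rfl fun x _ => by ring

lemma HH_comm (a b : Fin 4) : bH - bE a - bE b = bH - bE b - bE a := sub_right_comm _ _ _

lemma bE_ne_of_ne {m i : Fin 4} (h : bE m ≠ bE i) : m ≠ i := by
  rintro rfl; exact h rfl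

lemma boundary_self {B : V5} (hB : B ∈ BoundaryClasses5) : interForm B B = -1 := by
  rcases hB with ⟨i, rfl⟩ | ⟨i, j, hij, rfl⟩
  · rw [interForm_bE, bE_inr]; simp
  · rw [interForm_H]
    simp [Pi.sub_apply, bH_inl, bH_inr, bE_inl, bE_inr, hij, hij.symm]

lemma sum_neg {n : ℕ} (f : Fin n → ℝ) (h : ∀ t, f t ≤ 0) (t0 : Fin n) (h0 : f t0 < 0) :
    ∑ t, f t < 0 := by
  have h1 : f t0 + ∑ t ∈ Finset.univ.erase t0, f t = ∑ t, f t :=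
    Finset.add_sum_erase _ f (Finset.mem_univ t0)
  have h2 : ∑ t ∈ Finset.univ.erase t0, f t ≤ 0 :=
    Finset.sum_nonpos fun t _ => h t
  linarith

lemma exists_pos {n : ℕ} {φ : V5} {c : Fin n → ℝ} {g : Fin n → V5} (hc : ∀ t, 0 ≤ c t)
    (hφ : φ = ∑ t, c t • g t) (h0 : φ ≠ 0) : ∃ t, 0 < c t := by
  by_contra h
  push_neg at h
  apply h0
  rw [hφ]
  have : ∀ t, c t = 0 := fun t => le_antisymm (h t) (hc t)
  simp [this]

lemma fin4_compl : ∀ i j : Fin 4, i ≠ j → ∃ k l : Fin 4,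
    ({i, j, k, l} : Finset (Fin 4)) = univ := by decide

lemma fin4_distinct : ∀ i j k l : Fin 4, ({i, j, k, l} : Finset (Fin 4)) = univ →
    i ≠ j ∧ i ≠ k ∧ i ≠ l ∧ j ≠ k ∧ j ≠ l ∧ k ≠ l := by decide

lemma fin4_cover : ∀ i j k l p q : Fin 4, ({i, j, k, l} : Finset (Fin 4)) = univ → p ≠ q →
    (p = k ∧ q = l) ∨ (p = l ∧ q = k) ∨ p = i ∨ p = j ∨ q = i ∨ q = j := by decide

lemma nef_HE (j : Fin 4) : IsNef5 (bH - bE j) := by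
  rintro B (⟨m, rfl⟩ | ⟨a, b, hab, rfl⟩)
  · rw [interForm_bE]
    simp only [Pi.sub_apply, bH_inr, bE_inr]
    split_ifs <;> norm_num
  · rw [interForm_H]
    simp only [Pi.sub_apply, bH_inl, bH_inr, bE_inl, bE_inr]
    rcases eq_or_ne a j with rfl | ha
    · simp [hab.symm]
    · rcases eq_or_ne b j with rfl | hb <;> simp [ha, *]

lemma sumE_inl : ∑ c : Fin 4, bE c (Sum.inl ()) = 0 := by
  simp [bE_inl]

lemma sumE_inr (m : Fin 4) : ∑ c : Fin 4, bE c (Sum.inr m) = 1 := by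
  simp [bE_inr, Finset.sum_ite_eq, Finset.sum_ite_eq']

lemma nef_2H : IsNef5 ((2 : ℝ) • bH - ∑ a, bE a) := by
  rintro B (⟨m, rfl⟩ | ⟨a, b, hab, rfl⟩)
  · rw [interForm_bE]
    simp [Pi.sub_apply, Pi.smul_apply, bH_inr, sumE_inr]
  · rw [interForm_H]
    simp [Pi.sub_apply, Pi.smul_apply, bH_inl, bH_inr, sumE_inl, sumE_inr]
    norm_num

lemma HE_ne_zero (j : Fin 4) : bH - bE j ≠ (0 : V5) := by
  intro h
  have := congrFun h (Sum.inl ())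
  simp [Pi.sub_apply, bH_inl, bE_inl] at this

lemma twoH_ne_zero : (2 : ℝ) • bH - ∑ a, bE a ≠ (0 : V5) := by
  intro h
  have := congrFun h (Sum.inl ())
  simp [Pi.sub_apply, Pi.smul_apply, bH_inl, sumE_inl] at this

lemma combi_pair (A B : V5) : IsNonnegCombi {A, B} (A + B) := by
  refine ⟨2, fun _ => 1, ![A, B], fun t => zero_le_one, fun t => ?_, ?_⟩
  · fin_cases t <;> simp [Set.mem_insert_iff]
  · simp [Fin.sum_univ_two]

lemma moreover1 (i j : Fin 4) (_hij : i ≠ j) :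
    bE i + (bH - bE i - bE j) = bH - bE j ∧ IsNef5 (bH - bE j) :=
  ⟨by abel, nef_HE j⟩

lemma moreover2 (i j k l : Fin 4) (h : ({i, j, k, l} : Finset (Fin 4)) = univ) :
    (bH - bE i - bE j) + (bH - bE k - bE l) = (2 : ℝ) • bH - ∑ a, bE a ∧
      IsNef5 ((2 : ℝ) • bH - ∑ a, bE a) := by
  refine ⟨?_, nef_2H⟩
  obtain ⟨hij, hik, hil, hjk, hjl, hkl⟩ := fin4_distinct i j k l h
  have hsum : (∑ a, bE a) = bE i + bE j + bE k + bE l := by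
    rw [← h]
    rw [Finset.sum_insert (by simp [hij, hik, hil]),
      Finset.sum_insert (by simp [hjk, hjl]), Finset.sum_insert (by simp [hkl]),
      Finset.sum_singleton]
    abel
  rw [hsum, two_smul]
  abel

lemma pair1_works (i j : Fin 4) (hij : i ≠ j) :
    ∃ φ : V5, φ ≠ 0 ∧ IsNef5 φ ∧ IsNonnegCombi {bE i, bH - bE i - bE j} φ := by
  refine ⟨bH - bE j, HE_ne_zero j, nef_HE j, ?_⟩
  have := combi_pair (bE i) (bH - bE i - bE j)
  rwa [(moreover1 i j hij).1] at this

lemma pair2_works (i j k l : Fin 4) (h : ({i, j, k, l} : Finset (Fin 4)) = univ) :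
    ∃ φ : V5, φ ≠ 0 ∧ IsNef5 φ ∧
      IsNonnegCombi {bH - bE i - bE j, bH - bE k - bE l} φ := by
  refine ⟨(2 : ℝ) • bH - ∑ a, bE a, twoH_ne_zero, nef_2H, ?_⟩
  have := combi_pair (bH - bE i - bE j) (bH - bE k - bE l)
  rwa [(moreover2 i j k l h).1] at this

lemma pair_minimal {A B : V5} (hA : A ∈ BoundaryClasses5) (hB : B ∈ BoundaryClasses5) :
    ∀ J : Set V5, J ⊂ {A, B} → ¬∃ φ : V5, φ ≠ 0 ∧ IsNef5 φ ∧ IsNonnegCombi J φ := by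
  intro J hJ ⟨φ, h0, hnef, n, c, g, hc, hg, hφ⟩
  have hJs : J ⊆ {A, B} := hJ.1
  have hmiss : A ∉ J ∨ B ∉ J := by
    by_contra h
    push_neg at h
    exact hJ.2 (by rintro x (rfl | rfl) <;> [exact h.1; exact h.2])
  obtain ⟨C, hCb, hallC⟩ : ∃ C, C ∈ BoundaryClasses5 ∧ ∀ t, g t = C := by
    rcases hmiss with hA' | hB'
    · exact ⟨B, hB, fun t => by
        rcases hJs (hg t) with h' | h'
        · exact absurd (h' ▸ hg t) hA'
        · exact h'⟩
    · exact ⟨A, hA, fun t => by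
        rcases hJs (hg t) with h' | h'
        · exact h'
        · exact absurd (h' ▸ hg t) hB'⟩
  obtain ⟨t0, ht0⟩ := exists_pos hc hφ h0
  have hpos : 0 ≤ interForm φ C := hnef C hCb
  rw [hφ, interForm_sum_left] at hpos
  have : ∑ t, c t * interForm (g t) C < 0 := by
    refine sum_neg _ (fun t => ?_) t0 ?_
    · rw [hallC t, boundary_self hCb]
      nlinarith [hc t]
    · rw [hallC t0, boundary_self hCb]
      nlinarith
  linarith

lemma forward {I : Set V5} (h : NefMinimal5 I) :
    (∃ i j : Fin 4, i ≠ j ∧ I = {bE i, bH - bE i - bE j}) ∨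
      (∃ i j k l : Fin 4, ({i, j, k, l} : Finset (Fin 4)) = univ ∧
        I = {bH - bE i - bE j, bH - bE k - bE l}) := by
  obtain ⟨hsub, ⟨φ, h0, hnef, n, c, g, hc, hg, hφ⟩, hmin⟩ := h
  -- Step A: some H-type class appears with positive coefficient
  have hAstep : ∃ t, 0 < c t ∧ ∃ a b, a ≠ b ∧ g t = bH - bE a - bE b := by
    obtain ⟨t0, ht0⟩ := exists_pos hc hφ h0
    rcases hsub (hg t0) with ⟨m, hm⟩ | ⟨a, b, hab, hgt⟩
    · by_contra hcon
      push_neg at hcon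
      have hpos : 0 ≤ interForm φ (bE m) := hnef _ (Or.inl ⟨m, rfl⟩)
      rw [hφ, interForm_sum_left] at hpos
      have hneg : ∑ t, c t * interForm (g t) (bE m) < 0 := by
        refine sum_neg _ (fun t => ?_) t0 ?_
        · rcases hsub (hg t) with ⟨p, hp⟩ | ⟨p, q, hpq, hgt'⟩
          · rw [hp, interForm_bE, bE_inr]
            have h1 : (0:ℝ) ≤ if m = p then 1 else 0 := by split_ifs <;> norm_num
            nlinarith [hc t]
          · have hct : ¬ 0 < c t := fun hpos' => hcon t hpos' p q hpq hgt'
            have : c t = 0 := le_antisymm (not_lt.mp hct) (hc t)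
            simp [this]
        · rw [hm, interForm_bE, bE_inr]
          rw [if_pos rfl]
          nlinarith
      linarith
    · exact ⟨t0, ht0, a, b, hab, hgt⟩
  obtain ⟨t1, hct1, a, b, hab, hgt1⟩ := hAstep
  have hmemH : bH - bE a - bE b ∈ I := hgt1 ▸ hg t1
  obtain ⟨k, l, hkl⟩ := fin4_compl a b hab
  -- Step C: one of the partners is also in I
  have hdisj : bE a ∈ I ∨ bE b ∈ I ∨ bH - bE k - bE l ∈ I := by
    by_contra hcon
    push_neg at hcon
    obtain ⟨hna, hnb, hnkl⟩ := hcon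
    have hpos : 0 ≤ interForm φ (bH - bE a - bE b) := hnef _ (Or.inr ⟨a, b, hab, rfl⟩)
    rw [hφ, interForm_sum_left] at hpos
    have hneg : ∑ t, c t * interForm (g t) (bH - bE a - bE b) < 0 := by
      refine sum_neg _ (fun t => ?_) t1 ?_
      · rcases hsub (hg t) with ⟨p, hp⟩ | ⟨p, q, hpq, hgt'⟩
        · have hpa : p ≠ a := by rintro rfl; exact hna (hp ▸ hg t)
          have hpb : p ≠ b := by rintro rfl; exact hnb (hp ▸ hg t)
          rw [hp, interForm_H]
          simp [bE_inl, bE_inr, hpa.symm, hpb.symm]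
        · have hval : interForm (g t) (bH - bE a - bE b) ≤ 0 := by
            rcases fin4_cover a b k l p q hkl hpq with ⟨rfl, rfl⟩ | ⟨rfl, rfl⟩ | h' | h' | h' | h'
            · exact absurd (hgt' ▸ hg t) hnkl
            · rw [HH_comm] at hgt'
              exact absurd (hgt' ▸ hg t) hnkl
            all_goals (
              rw [hgt', interForm_H]
              simp only [Pi.sub_apply, bH_inl, bH_inr, bE_inl, bE_inr]
              subst h'
              split_ifs <;> first | (norm_num; done) | simp_all)
          exact mul_nonpos_iff.mpr (Or.inl ⟨hc t, hval⟩)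
      · rw [hgt1, boundary_self (Or.inr ⟨a, b, hab, rfl⟩)]
        nlinarith
    linarith
  -- Step D: the pair is all of I
  rcases hdisj with hmem | hmem | hmem
  · have hPsub : ({bE a, bH - bE a - bE b} : Set V5) ⊆ I := by
      rintro x (rfl | rfl) <;> assumption
    have hPI : ({bE a, bH - bE a - bE b} : Set V5) = I := by
      by_contra hne
      exact hmin _ (Set.ssubset_iff_subset_ne.mpr ⟨hPsub, hne⟩) (pair1_works a b hab)
    exact Or.inl ⟨a, b, hab, hPI.symm⟩
  · have hmemH' : bH - bE b - bE a ∈ I := by rw [← HH_comm]; exact hmemH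
    have hPsub : ({bE b, bH - bE b - bE a} : Set V5) ⊆ I := by
      rintro x (rfl | rfl) <;> assumption
    have hPI : ({bE b, bH - bE b - bE a} : Set V5) = I := by
      by_contra hne
      exact hmin _ (Set.ssubset_iff_subset_ne.mpr ⟨hPsub, hne⟩) (pair1_works b a hab.symm)
    exact Or.inl ⟨b, a, hab.symm, hPI.symm⟩
  · have hPsub : ({bH - bE a - bE b, bH - bE k - bE l} : Set V5) ⊆ I := by
      rintro x (rfl | rfl) <;> assumption
    have hPI : ({bH - bE a - bE b, bH - bE k - bE l} : Set V5) = I := by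
      by_contra hne
      exact hmin _ (Set.ssubset_iff_subset_ne.mpr ⟨hPsub, hne⟩) (pair2_works a b k l hkl)
    exact Or.inr ⟨a, b, k, l, hkl, hPI.symm⟩

lemma backward1 (i j : Fin 4) (hij : i ≠ j) :
    NefMinimal5 {bE i, bH - bE i - bE j} := by
  have hA : bE i ∈ BoundaryClasses5 := Or.inl ⟨i, rfl⟩
  have hB : bH - bE i - bE j ∈ BoundaryClasses5 := Or.inr ⟨i, j, hij, rfl⟩
  exact ⟨by rintro x (rfl | rfl) <;> assumption, pair1_works i j hij, pair_minimal hA hB⟩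

lemma backward2 (i j k l : Fin 4) (h : ({i, j, k, l} : Finset (Fin 4)) = univ) :
    NefMinimal5 {bH - bE i - bE j, bH - bE k - bE l} := by
  obtain ⟨hij, -, -, -, -, hkl⟩ := fin4_distinct i j k l h
  have hA : bH - bE i - bE j ∈ BoundaryClasses5 := Or.inr ⟨i, j, hij, rfl⟩
  have hB : bH - bE k - bE l ∈ BoundaryClasses5 := Or.inr ⟨k, l, hkl, rfl⟩
  exact ⟨by rintro x (rfl | rfl) <;> assumption, pair2_works i j k l h, pair_minimal hA hB⟩


/-- **Example 4.10 (classification of nef-minimal subsets for `M̄₀,₅`).**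
The nef-minimal subsets of the ten boundary classes are exactly the twelve
pairs `{E_i, H − E_i − E_j}` (`i ≠ j`) and the three pairs
`{H − E_i − E_j, H − E_k − E_l}` (`{i,j,k,l} = {0,1,2,3}`).  Moreover each
pair of the first kind sums to the nef vector `H − E_j`, and each pair of the
second kind sums to the nef vector `2H − E_0 − E_1 − E_2 − E_3`. -/
theorem nefMinimal_classification_M05 :
    (∀ I : Set V5, NefMinimal5 I ↔
      ((∃ i j : Fin 4, i ≠ j ∧ I = {bE i, bH - bE i - bE j}) ∨
        (∃ i j k l : Fin 4, ({i, j, k, l} : Finset (Fin 4)) = univ ∧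
          I = {bH - bE i - bE j, bH - bE k - bE l}))) ∧
    (∀ i j : Fin 4, i ≠ j →
      bE i + (bH - bE i - bE j) = bH - bE j ∧ IsNef5 (bH - bE j)) ∧
    (∀ i j k l : Fin 4, ({i, j, k, l} : Finset (Fin 4)) = univ →
      (bH - bE i - bE j) + (bH - bE k - bE l) = (2 : ℝ) • bH - ∑ a, bE a ∧
        IsNef5 ((2 : ℝ) • bH - ∑ a, bE a)) := by
  refine ⟨fun I => ⟨forward, ?_⟩, moreover1, moreover2⟩
  rintro (⟨i, j, hij, rfl⟩ | ⟨i, j, k, l, hkl, rfl⟩)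
  · exact backward1 i j hij
  · exact backward2 i j k l hkl

end
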